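/- Let a, b, v, C be real constants with a > 0, b > 0, v > 0, and let I ⊆ (0, ∞) be an open interval on which D(t) := a·b^(−2v)·Γ(2v, bt)·e^(bt) + C·e^(bt) is nonzero. Then the function s(t) := 1/D(t) is differentiable on I and satisfies the first characteristic equation s′(t) = s(t)·(a·t^(2v−1)·s(t) − b) for every t ∈ I. -/

import Mathlib

open Real MeasureTheory

/-- The upper incomplete gamma function `Γ(q, p) = ∫_p^∞ x^(q−1) e^(−x) dx`. -/
noncomputable def upperGamma (q p : ℝ) : ℝ := ∫ x in Set.Ioi p, x ^ (q - 1) * Real.exp (-x)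

/-- The denominator `D(t) = a·b^(−2v)·Γ(2v, bt)·e^(bt) + C·e^(bt)`. -/
noncomputable def Dfun (a b v C t : ℝ) : ℝ :=
  a * b ^ (-(2 * v)) * upperGamma (2 * v) (b * t) * Real.exp (b * t) + C * Real.exp (b * t)

lemma upperGamma_hasDerivAt (q : ℝ) (hq : 0 < q) {p : ℝ} (hp : 0 < p) :
    HasDerivAt (upperGamma q) (-(p ^ (q - 1) * Real.exp (-p))) p := by
  set f : ℝ → ℝ := fun x => x ^ (q - 1) * Real.exp (-x) with hf
  have hint : IntegrableOn f (Set.Ioi 0) := by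
    have := Real.GammaIntegral_convergent hq
    simpa [hf, mul_comm] using this
  have hcontAt : ∀ x ∈ Set.Ioi (0:ℝ), ContinuousAt f x := by
    intro x hx
    exact (Real.continuousAt_rpow_const x (q - 1) (Or.inl (ne_of_gt hx))).mul
      ((Real.continuous_exp.comp continuous_neg).continuousAt)
  have hmeas : StronglyMeasurableAtFilter f (nhds p) :=
    ContinuousAt.stronglyMeasurableAtFilter isOpen_Ioi hcontAt p hp
  have hii : IntervalIntegrable f volume 0 p := by
    rw [intervalIntegrable_iff_integrableOn_Ioc_of_le hp.le]
    exact hint.mono_set Set.Ioc_subset_Ioi_self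
  have hderiv : HasDerivAt (fun r => ∫ x in (0:ℝ)..r, f x) (f p) p :=
    intervalIntegral.integral_hasDerivAt_right hii hmeas (hcontAt p hp)
  have key : ∀ r ∈ Set.Ioi (0:ℝ),
      upperGamma q r = (∫ x in Set.Ioi (0:ℝ), f x) - ∫ x in (0:ℝ)..r, f x := by
    intro r hr
    rw [intervalIntegral.integral_of_le (le_of_lt hr)]
    have hu : Set.Ioc (0:ℝ) r ∪ Set.Ioi r = Set.Ioi (0:ℝ) :=
      Set.Ioc_union_Ioi_eq_Ioi (le_of_lt hr)
    have hsum : (∫ x in Set.Ioi (0:ℝ), f x)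
        = (∫ x in Set.Ioc (0:ℝ) r, f x) + ∫ x in Set.Ioi r, f x := by
      rw [← hu]
      exact setIntegral_union (Set.Ioc_disjoint_Ioi le_rfl) measurableSet_Ioi
        (hint.mono_set Set.Ioc_subset_Ioi_self)
        (hint.mono_set (Set.Ioi_subset_Ioi (le_of_lt hr)))
    rw [hsum]; unfold upperGamma; ring
  have heq : upperGamma q =ᶠ[nhds p]
      fun r => (∫ x in Set.Ioi (0:ℝ), f x) - ∫ x in (0:ℝ)..r, f x := by
    filter_upwards [isOpen_Ioi.mem_nhds hp] with r hr using key r hr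
  have : HasDerivAt (fun r => (∫ x in Set.Ioi (0:ℝ), f x) - ∫ x in (0:ℝ)..r, f x)
      (-(f p)) p := hderiv.const_sub _
  exact this.congr_of_eventuallyEq heq

lemma Dfun_hasDerivAt (a b v C : ℝ) (hb : 0 < b) (hv : 0 < v) {t : ℝ} (ht : 0 < t) :
    HasDerivAt (Dfun a b v C) (b * Dfun a b v C t - a * t ^ (2 * v - 1)) t := by
  have hbt : 0 < b * t := mul_pos hb ht
  have hbt' : HasDerivAt (fun x : ℝ => b * x) b t := by
    simpa using (hasDerivAt_id t).const_mul b
  have hG : HasDerivAt (fun x : ℝ => upperGamma (2 * v) (b * x))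
      (-((b * t) ^ (2 * v - 1) * Real.exp (-(b * t))) * b) t :=
    (upperGamma_hasDerivAt (2 * v) (by linarith) hbt).comp t hbt'
  have hE : HasDerivAt (fun x : ℝ => Real.exp (b * x)) (Real.exp (b * t) * b) t :=
    hbt'.exp
  have hD : HasDerivAt (Dfun a b v C)
      ((a * b ^ (-(2 * v)) * (-((b * t) ^ (2 * v - 1) * Real.exp (-(b * t))) * b))
          * Real.exp (b * t)
        + (a * b ^ (-(2 * v)) * upperGamma (2 * v) (b * t)) * (Real.exp (b * t) * b)
        + C * (Real.exp (b * t) * b)) t := by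
    exact ((hG.const_mul (a * b ^ (-(2 * v)))).mul hE).add (hE.const_mul C)
  convert hD using 1
  have h1 : Real.exp (-(b * t)) * Real.exp (b * t) = 1 := by
    rw [← Real.exp_add]; simp
  have h2 : b ^ (-(2 * v)) * b ^ (2 * v - 1) * b = 1 := by
    rw [← Real.rpow_add hb, ← Real.rpow_add_one (ne_of_gt hb)]
    have he : -(2 * v) + (2 * v - 1) + 1 = 0 := by ring
    rw [he, Real.rpow_zero]
  have h3 : (b * t) ^ (2 * v - 1) = b ^ (2 * v - 1) * t ^ (2 * v - 1) :=
    Real.mul_rpow hb.le ht.le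
  unfold Dfun
  rw [h3]
  set P := b ^ (-(2 * v))
  set Q := b ^ (2 * v - 1)
  set T := t ^ (2 * v - 1)
  set E := Real.exp (b * t)
  set E' := Real.exp (-(b * t))
  set G := upperGamma (2 * v) (b * t)
  linear_combination (a * P * Q * T * b) * h1 + (a * T) * h2

/-- On an open interval `I = (α, β) ⊆ (0, ∞)` where `D` is nonzero, `s(t) := 1/D(t)` is
differentiable and satisfies the first characteristic equation
`s′(t) = s(t)·(a·t^(2v−1)·s(t) − b)`. -/
theorem stmt3 (a b v C α β : ℝ) (ha : 0 < a) (hb : 0 < b) (hv : 0 < v)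
    (hI : Set.Ioo α β ⊆ Set.Ioi 0)
    (hD : ∀ t ∈ Set.Ioo α β, Dfun a b v C t ≠ 0) :
    DifferentiableOn ℝ (fun t : ℝ => 1 / Dfun a b v C t) (Set.Ioo α β) ∧
    ∀ t ∈ Set.Ioo α β,
      HasDerivAt (fun t : ℝ => 1 / Dfun a b v C t)
        ((1 / Dfun a b v C t) * (a * t ^ (2 * v - 1) * (1 / Dfun a b v C t) - b)) t := by
  have main : ∀ t ∈ Set.Ioo α β,
      HasDerivAt (fun t : ℝ => 1 / Dfun a b v C t)
        ((1 / Dfun a b v C t) * (a * t ^ (2 * v - 1) * (1 / Dfun a b v C t) - b)) t := by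
    intro t ht
    have ht0 : 0 < t := hI ht
    have hne := hD t ht
    have h := (Dfun_hasDerivAt a b v C hb hv ht0).inv hne
    have : HasDerivAt (fun t : ℝ => 1 / Dfun a b v C t)
        (-(b * Dfun a b v C t - a * t ^ (2 * v - 1)) / Dfun a b v C t ^ 2) t := by
      have e : (fun t : ℝ => 1 / Dfun a b v C t) = (Dfun a b v C)⁻¹ := by
        funext x; simp [one_div]
      rw [e]; convert h using 1
    convert this using 1
    field_simp
    ring
  exact ⟨fun t ht => (main t ht).differentiableAt.differentiableWithinAt, main⟩
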